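/- For a nonempty compact convex set X ⊂ ℝ², its maximal Feret diameter diam(X) = sup_θ H_X(θ) and perimeter U(X) satisfy 2·diam(X) ≤ U(X) ≤ 4·diam(X). -/

import Mathlib

open Real Pointwise MeasureTheory
set_option maxHeartbeats 1000000

/-- Points of the Euclidean plane. -/
abbrev Pt := EuclideanSpace ℝ (Fin 2)

noncomputable def mk2 (a b : ℝ) : Pt := (WithLp.equiv 2 (Fin 2 → ℝ)).symm ![a, b]

/-- Support function `f_X(x) = sup_{s ∈ X} ⟨x, s⟩`. -/
noncomputable def fS (X : Set Pt) (x : Pt) : ℝ :=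
  sSup ((fun s => (inner ℝ x s : ℝ)) '' X)

/-- Direction vector `(-sin θ, cos θ)`. -/
noncomputable def dir (θ : ℝ) : Pt := mk2 (-Real.sin θ) (Real.cos θ)

/-- Support function in direction θ. -/
noncomputable def hF (X : Set Pt) (θ : ℝ) : ℝ := fS X (dir θ)

/-- The Feret diameter `H_X(θ) = h_X(θ) + h_{-X}(θ)`. -/
noncomputable def feret (X : Set Pt) (θ : ℝ) : ℝ := hF X θ + hF (-X) θ

/-- The segment with endpoints `±½(cos θ, sin θ)`. -/
noncomputable def seg (θ : ℝ) : Set Pt :=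
  segment ℝ (-mk2 (Real.cos θ / 2) (Real.sin θ / 2)) (mk2 (Real.cos θ / 2) (Real.sin θ / 2))

namespace PerimDiamAux

lemma norm_dir (θ : ℝ) : ‖dir θ‖ = 1 := by
  rw [EuclideanSpace.norm_eq]
  simp only [dir, mk2, WithLp.equiv_symm_apply, PiLp.toLp_apply, Fin.sum_univ_two, Matrix.cons_val_zero,
    Matrix.cons_val_one, Matrix.head_cons, Real.norm_eq_abs, sq_abs]
  rw [neg_sq, Real.sin_sq_add_cos_sq]
  exact Real.sqrt_one

lemma cont_dir : Continuous dir := by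
  unfold dir mk2
  refine Continuous.comp ?_ ?_
  · exact (PiLp.continuous_toLp 2 fun _ : Fin 2 => ℝ)
  · refine continuous_pi fun i => ?_
    fin_cases i <;> simp <;> continuity

lemma inner_dir (θ : ℝ) (s : Pt) :
    (inner ℝ (dir θ) s : ℝ) = -Real.sin θ * s 0 + Real.cos θ * s 1 := by
  simp [dir, mk2, EuclideanSpace.inner_eq_star_dotProduct, Matrix.vecHead, Matrix.vecTail]
  ring

lemma phase (v : Pt) (hv : v ≠ 0) :
    ∃ φ, ∀ θ, (inner ℝ (dir θ) v : ℝ) = ‖v‖ * Real.cos (θ - φ) := by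
  set a := v 0; set b := v 1
  have hnorm : ‖v‖ = Real.sqrt (b^2 + a^2) := by
    rw [EuclideanSpace.norm_eq, Fin.sum_univ_two, Real.norm_eq_abs, Real.norm_eq_abs,
      sq_abs, sq_abs, add_comm]
  set z : ℂ := ⟨b, -a⟩ with hz
  have habs : ‖z‖ = ‖v‖ := by
    rw [Complex.norm_def, Complex.normSq_mk, hnorm]
    ring_nf
  have hz0 : z ≠ 0 := by
    intro h
    apply hv
    have : ‖z‖ = 0 := by rw [h]; simp
    rw [habs] at this
    exact norm_eq_zero.mp this
  refine ⟨Complex.arg z, fun θ => ?_⟩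
  have hc : Real.cos (Complex.arg z) = b / ‖v‖ := by rw [Complex.cos_arg hz0, habs]
  have hs : Real.sin (Complex.arg z) = -a / ‖v‖ := by rw [Complex.sin_arg, habs]
  have hr : ‖v‖ ≠ 0 := norm_ne_zero_iff.mpr hv
  rw [inner_dir, Real.cos_sub, hc, hs]
  field_simp
  ring

lemma abscos : ∫ x in (0:ℝ)..π, |Real.cos x| = 2 := by
  rw [← intervalIntegral.integral_add_adjacent_intervals (b := π/2)
    (by apply Continuous.intervalIntegrable; continuity)
    (by apply Continuous.intervalIntegrable; continuity)]
  have h1 : ∫ x in (0:ℝ)..(π/2), |Real.cos x| = 1 := by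
    rw [intervalIntegral.integral_congr (g := Real.cos) ?_]
    · simp [integral_cos]
    · intro x hx
      rw [Set.uIcc_of_le (by positivity)] at hx
      exact abs_of_nonneg (Real.cos_nonneg_of_mem_Icc ⟨by linarith [hx.1, Real.pi_pos], hx.2⟩)
  have h2 : ∫ x in (π/2:ℝ)..π, |Real.cos x| = 1 := by
    rw [intervalIntegral.integral_congr (g := fun x => -Real.cos x) ?_]
    · simp [integral_cos]
    · intro x hx
      rw [Set.uIcc_of_le (by linarith [Real.pi_pos])] at hx
      show |Real.cos x| = -Real.cos x
      rw [abs_of_nonpos]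
      exact Real.cos_nonpos_of_pi_div_two_le_of_le hx.1 (by linarith [hx.2, Real.pi_pos])
  rw [h1, h2]; norm_num

lemma abscos_shift (φ : ℝ) : ∫ x in (0:ℝ)..π, |Real.cos (x - φ)| = 2 := by
  rw [intervalIntegral.integral_comp_sub_right (fun u => |Real.cos u|) φ]
  have hper : Function.Periodic (fun u => |Real.cos u|) π := by
    intro x; simp [Real.cos_add_pi]
  have := hper.intervalIntegral_add_eq (t := -φ) (s := 0)
  simp only [zero_add] at this
  rw [show (0:ℝ) - φ = -φ by ring, show π - φ = -φ + π by ring, this, abscos]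

lemma fS_le {X : Set Pt} (hne : X.Nonempty) {x : Pt} {c : ℝ}
    (h : ∀ s ∈ X, (inner ℝ x s : ℝ) ≤ c) : fS X x ≤ c :=
  csSup_le (hne.image _) (by rintro _ ⟨s, hs, rfl⟩; exact h s hs)

lemma le_fS {X : Set Pt} (hcomp : IsCompact X) {x s : Pt} (hs : s ∈ X) :
    (inner ℝ x s : ℝ) ≤ fS X x :=
  le_csSup (hcomp.image (continuous_const.inner continuous_id)).bddAbove ⟨s, hs, rfl⟩

lemma fS_lip {X : Set Pt} (hne : X.Nonempty) (hcomp : IsCompact X) {R : ℝ}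
    (hR : ∀ s ∈ X, ‖s‖ ≤ R) (x y : Pt) : fS X x - fS X y ≤ R * ‖x - y‖ := by
  rw [sub_le_iff_le_add]
  refine fS_le hne fun s hs => ?_
  have : (inner ℝ x s : ℝ) = inner ℝ (x - y) s + inner ℝ y s := by
    rw [← inner_add_left, sub_add_cancel]
  rw [this]
  refine add_le_add ?_ (le_fS hcomp hs)
  calc (inner ℝ (x - y) s : ℝ) ≤ ‖x - y‖ * ‖s‖ := real_inner_le_norm _ _
    _ ≤ ‖x - y‖ * R := by gcongr; exact hR s hs
    _ = R * ‖x - y‖ := mul_comm _ _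

lemma fS_cont {X : Set Pt} (hne : X.Nonempty) (hcomp : IsCompact X) :
    Continuous (fS X) := by
  obtain ⟨R, hR⟩ := hcomp.isBounded.subset_closedBall 0
  have hR' : ∀ s ∈ X, ‖s‖ ≤ R := fun s hs => by
    simpa [Metric.mem_closedBall, dist_zero_right] using hR hs
  have hR0 : 0 ≤ R := le_trans (norm_nonneg _) (hR' _ hne.choose_spec)
  refine (LipschitzWith.of_dist_le_mul (K := ⟨R, hR0⟩) fun x y => ?_).continuous
  rw [Real.dist_eq, abs_sub_le_iff]
  constructor
  · have h := fS_lip hne hcomp hR' x y; rw [dist_eq_norm]; exact h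
  · have h := fS_lip hne hcomp hR' y x; rw [dist_eq_norm, norm_sub_rev x y]; exact h

end PerimDiamAux

open PerimDiamAux

theorem perimeter_diam_equiv (X : Set Pt)
    (hne : X.Nonempty) (hcomp : IsCompact X) (hconv : Convex ℝ X) :
    2 * (⨆ θ : ℝ, feret X θ) ≤ (∫ θ in (0:ℝ)..π, feret X θ) ∧
    (∫ θ in (0:ℝ)..π, feret X θ) ≤ 4 * (⨆ θ : ℝ, feret X θ) := by
  have hneN : (-X).Nonempty := hne.neg
  have hcompN : IsCompact (-X) := hcomp.neg
  -- continuity and integrability of feret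
  have hcont : Continuous (feret X) := by
    have : feret X = fun θ => fS X (dir θ) + fS (-X) (dir θ) := rfl
    rw [this]
    exact ((fS_cont hne hcomp).comp cont_dir).add ((fS_cont hneN hcompN).comp cont_dir)
  have hint : IntervalIntegrable (feret X) volume 0 π := hcont.intervalIntegrable 0 π
  -- maximizer of distance
  obtain ⟨⟨p, q⟩, hpq, hmax⟩ := (hcomp.prod hcomp).exists_isMaxOn (hne.prod hne)
    continuous_dist.continuousOn
  have hmax' : ∀ x ∈ X, ∀ y ∈ X, dist x y ≤ dist p q := by
    have h2 := fun (x y : Pt) (hx : x ∈ X) (hy : y ∈ X) => hmax (Set.mk_mem_prod hx hy)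
    intro x hx y hy
    simpa using h2 x y hx hy
  clear hmax
  set D := dist p q with hD
  -- feret bounded above by D
  have hferet_le : ∀ θ, feret X θ ≤ D := by
    intro θ
    show fS X (dir θ) + fS (-X) (dir θ) ≤ D
    rw [← le_sub_iff_add_le]
    refine fS_le hne fun s hs => ?_
    rw [le_sub_iff_add_le, add_comm, ← le_sub_iff_add_le]
    refine fS_le hneN fun u hu => ?_
    rw [le_sub_iff_add_le, add_comm, ← inner_add_right]
    calc (inner ℝ (dir θ) (s + u) : ℝ) ≤ ‖dir θ‖ * ‖s + u‖ := real_inner_le_norm _ _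
      _ = ‖s - (-u)‖ := by rw [norm_dir, one_mul, sub_neg_eq_add]
      _ = dist s (-u) := (dist_eq_norm _ _).symm
      _ ≤ D := hmax' s hs (-u) (Set.mem_neg.mp hu)
  have hbdd : BddAbove (Set.range (feret X)) :=
    ⟨D, by rintro _ ⟨θ, rfl⟩; exact hferet_le θ⟩
  -- feret nonneg
  have hferet_nonneg : ∀ θ, 0 ≤ feret X θ := by
    intro θ
    obtain ⟨s, hs⟩ := hne
    have h1 := le_fS (x := dir θ) hcomp hs
    have h2 := le_fS (x := dir θ) hcompN (Set.neg_mem_neg.mpr hs)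
    have : (inner ℝ (dir θ) (-s) : ℝ) = -(inner ℝ (dir θ) s) := inner_neg_right _ _
    show 0 ≤ fS X (dir θ) + fS (-X) (dir θ)
    rw [this] at h2
    linarith
  set M := ⨆ θ : ℝ, feret X θ with hMdef
  have hM0 : 0 ≤ M := le_trans (hferet_nonneg 0) (le_ciSup hbdd 0)
  have hMD : M ≤ D := ciSup_le hferet_le
  constructor
  · -- lower bound
    -- feret θ ≥ |⟨dir θ, p - q⟩|
    have hkey : ∀ θ, |(inner ℝ (dir θ) (p - q) : ℝ)| ≤ feret X θ := by
      intro θ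
      rw [abs_le]
      have hq : -q ∈ -X := Set.neg_mem_neg.mpr hpq.2
      have hp : -p ∈ -X := Set.neg_mem_neg.mpr hpq.1
      constructor
      · have := add_le_add (le_fS (x := dir θ) hcomp hpq.2) (le_fS (x := dir θ) hcompN hp)
        have he : (inner ℝ (dir θ) q : ℝ) + inner ℝ (dir θ) (-p) = -(inner ℝ (dir θ) (p - q)) := by
          rw [inner_neg_right, inner_sub_right]; ring
        rw [he] at this
        show -(feret X θ) ≤ _
        have : -(fS X (dir θ) + fS (-X) (dir θ)) ≤ inner ℝ (dir θ) (p - q) := by linarith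
        exact this
      · have := add_le_add (le_fS (x := dir θ) hcomp hpq.1) (le_fS (x := dir θ) hcompN hq)
        have he : (inner ℝ (dir θ) p : ℝ) + inner ℝ (dir θ) (-q) = inner ℝ (dir θ) (p - q) := by
          rw [inner_neg_right, inner_sub_right]; ring
        rw [he] at this
        exact this
    by_cases hpq0 : p = q
    · have hD0 : D = 0 := by rw [hD, hpq0, dist_self]
      have : (0:ℝ) ≤ ∫ θ in (0:ℝ)..π, feret X θ :=
        intervalIntegral.integral_nonneg Real.pi_pos.le fun θ _ => hferet_nonneg θ
      nlinarith [hMD, hM0]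
    · have hv : p - q ≠ 0 := sub_ne_zero.mpr hpq0
      obtain ⟨φ, hφ⟩ := phase (p - q) hv
      have hnd : ‖p - q‖ = D := (dist_eq_norm p q).symm
      have hmono : ∫ θ in (0:ℝ)..π, ‖p - q‖ * |Real.cos (θ - φ)| ≤
          ∫ θ in (0:ℝ)..π, feret X θ := by
        refine intervalIntegral.integral_mono_on Real.pi_pos.le ?_ hint fun θ _ => ?_
        · apply Continuous.intervalIntegrable; continuity
        · calc ‖p - q‖ * |Real.cos (θ - φ)| = |‖p - q‖ * Real.cos (θ - φ)| := by
                rw [abs_mul, abs_of_nonneg (norm_nonneg _)]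
            _ = |(inner ℝ (dir θ) (p - q) : ℝ)| := by rw [hφ θ]
            _ ≤ feret X θ := hkey θ
      have hval : ∫ θ in (0:ℝ)..π, ‖p - q‖ * |Real.cos (θ - φ)| = 2 * D := by
        rw [intervalIntegral.integral_const_mul, abscos_shift, hnd]; ring
      rw [hval] at hmono
      linarith [mul_le_mul_of_nonneg_left hMD (by norm_num : (0:ℝ) ≤ 2)]
  · -- upper bound
    have h1 : ∫ θ in (0:ℝ)..π, feret X θ ≤ ∫ _ in (0:ℝ)..π, M := by
      refine intervalIntegral.integral_mono_on Real.pi_pos.le hint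
        intervalIntegrable_const fun θ _ => le_ciSup hbdd θ
    rw [intervalIntegral.integral_const, smul_eq_mul, sub_zero] at h1
    calc ∫ θ in (0:ℝ)..π, feret X θ ≤ π * M := h1
      _ ≤ 4 * M := by
          have := Real.pi_le_four
          nlinarith
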